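/- arXiv:2212.12764 — 5 statements merged into one kernel-verified Lean document; each statement's English description precedes it below -/
import Mathlib

section
/- Every finite directed graph (without self-loops) has a quasi-kernel. -/
/-- A finite directed graph without self-loops: a finite vertex set together with a
(decidable) arc relation whose arcs join vertices and which has no self-loops. -/
structure FinDigraph (α : Type) [DecidableEq α] where
  verts : Finset α
  adj : α → α → Bool
  adj_mem_left : ∀ u v, adj u v = true → u ∈ verts
  adj_mem_right : ∀ u v, adj u v = true → v ∈ verts
  no_loops : ∀ u, adj u u = false

namespace FinDigraph

variable {α : Type} [DecidableEq α]

/-- The open out-neighborhood `N⁺(u)`. -/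
def outNbhd (D : FinDigraph α) (u : α) : Finset α := D.verts.filter (fun v => D.adj u v)

/-- The closed out-neighborhood `N⁺[u] = N⁺(u) ∪ {u}`. -/
def closedNbhd (D : FinDigraph α) (u : α) : Finset α := insert u (D.outNbhd u)

/-- The out-degree `d⁺(u) = |N⁺(u)|`. -/
def outDeg (D : FinDigraph α) (u : α) : ℕ := (D.outNbhd u).card

/-- `D − S`: the subgraph induced by `V(D) − S`. -/
def del (D : FinDigraph α) (S : Finset α) : FinDigraph α where
  verts := D.verts \ S
  adj := fun u v => D.adj u v && decide (u ∉ S) && decide (v ∉ S)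
  adj_mem_left := by
    intro u v h
    simp only [Bool.and_eq_true, decide_eq_true_eq] at h
    exact Finset.mem_sdiff.2 ⟨D.adj_mem_left u v h.1.1, h.1.2⟩
  adj_mem_right := by
    intro u v h
    simp only [Bool.and_eq_true, decide_eq_true_eq] at h
    exact Finset.mem_sdiff.2 ⟨D.adj_mem_right u v h.1.1, h.2⟩
  no_loops := by intro u; simp [D.no_loops u]

/-- A source: a vertex with no ingoing arc. -/
def IsSource (D : FinDigraph α) (u : α) : Prop := u ∈ D.verts ∧ ∀ v, D.adj v u = false

/-- The set of sources of `D`. -/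
def sources (D : FinDigraph α) : Finset α :=
  D.verts.filter (fun u => ∀ v ∈ D.verts, D.adj v u = false)

/-- A quasi-kernel: an independent set `Q ⊆ V(D)` such that every vertex of `D`
is in `Q`, has an in-neighbor in `Q`, or is reachable in two steps from `Q`. -/
def IsQuasiKernel (D : FinDigraph α) (Q : Finset α) : Prop :=
  Q ⊆ D.verts ∧
  (∀ u ∈ Q, ∀ v ∈ Q, D.adj u v = false) ∧
  (∀ w ∈ D.verts, w ∈ Q ∨ (∃ v ∈ Q, D.adj v w = true) ∨
    (∃ u ∈ Q, ∃ v, D.adj u v = true ∧ D.adj v w = true))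

/-- Breakdown sequences (Definition 3 of the paper). -/
inductive IsBDS : FinDigraph α → List (α × Finset α) → Prop where
  | nil (D : FinDigraph α) : D.verts = ∅ → IsBDS D []
  | isolated (D : FinDigraph α) (u : α) (B : List (α × Finset α)) :
      (∀ x y, D.adj x y = false) → u ∈ D.verts →
      IsBDS (D.del {u}) B → IsBDS D ((u, (∅ : Finset α)) :: B)
  | step (D : FinDigraph α) (u : α) (B : List (α × Finset α)) :
      u ∈ D.verts → 0 < D.outDeg u →
      ((D.del (D.closedNbhd u)).sources \ D.sources).card ≤ D.outDeg u →
      IsBDS (D.del (D.closedNbhd u)) B → IsBDS D ((u, D.outNbhd u) :: B)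

/-- `F(B)`: the set of first components of the pairs in `B`. -/
def F (B : List (α × Finset α)) : Finset α := (B.map Prod.fst).toFinset

/-- A quasi-kernel `Q` is constructive with regard to `B` and `D`
(Definition 5 of the paper). -/
def IsConstructive (D : FinDigraph α) (B : List (α × Finset α)) (Q : Finset α) : Prop :=
  IsQuasiKernel D Q ∧
  ∀ p ∈ B, p.1 ∈ Q ∨ (∃ v ∈ Q, D.adj v p.1 = true) ∨
    (p.2 = ∅ ∧ ∃ u v M, ((u : α), (M : Finset α)) ∈ B ∧ v ∈ M ∧ D.adj v p.1 = true)

end FinDigraph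

namespace FinDigraph

variable {α : Type} [DecidableEq α]

lemma del_adj_iff (D : FinDigraph α) (S : Finset α) (x y : α) :
    (D.del S).adj x y = true ↔ D.adj x y = true ∧ x ∉ S ∧ y ∉ S := by
  simp [del, and_assoc]

lemma closedNbhd_subset (D : FinDigraph α) {v : α} (hv : v ∈ D.verts) :
    D.closedNbhd v ⊆ D.verts := by
  intro x hx
  rcases Finset.mem_insert.1 hx with rfl | hx
  · exact hv
  · exact (Finset.mem_filter.1 hx).1

end FinDigraph

/-- Every finite directed graph (without self-loops) has a quasi-kernel. -/
theorem every_digraph_has_quasiKernel {α : Type} [DecidableEq α] (D : FinDigraph α) :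
    ∃ Q : Finset α, D.IsQuasiKernel Q := by
  generalize hn : D.verts.card = n
  induction n using Nat.strong_induction_on generalizing D with
  | _ n ih =>
  rcases Finset.eq_empty_or_nonempty D.verts with he | ⟨v, hv⟩
  · refine ⟨∅, by simp [FinDigraph.IsQuasiKernel, he], by simp, ?_⟩
    intro w hw; simp [he] at hw
  set S := D.closedNbhd v with hS
  have hvS : v ∈ S := Finset.mem_insert_self _ _
  have hSsub : S ⊆ D.verts := D.closedNbhd_subset hv
  set D₁ := D.del S with hD₁
  have hverts : D₁.verts = D.verts \ S := rfl
  have hcard : D₁.verts.card < n := by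
    rw [← hn, hverts]
    exact Finset.card_lt_card (Finset.sdiff_ssubset hSsub ⟨v, hvS⟩)
  obtain ⟨Q₁, hsub, hindep, hcov⟩ := ih D₁.verts.card hcard D₁ rfl
  have hQ₁S : ∀ x ∈ Q₁, x ∉ S := by
    intro x hx
    exact (Finset.mem_sdiff.1 (hsub hx)).2
  have hQ₁V : ∀ x ∈ Q₁, x ∈ D.verts := by
    intro x hx
    exact (Finset.mem_sdiff.1 (hsub hx)).1
  have hindep' : ∀ u ∈ Q₁, ∀ w ∈ Q₁, D.adj u w = false := by
    intro u hu w hw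
    by_contra h
    rw [Bool.not_eq_false] at h
    have : D₁.adj u w = true :=
      (FinDigraph.del_adj_iff D S u w).2 ⟨h, hQ₁S u hu, hQ₁S w hw⟩
    simp [hindep u hu w hw] at this
  have hmemS : ∀ w, w ∈ S → w = v ∨ D.adj v w = true := by
    intro w hw
    rcases Finset.mem_insert.1 hw with rfl | hw
    · exact Or.inl rfl
    · exact Or.inr (Finset.mem_filter.1 hw).2
  by_cases hdom : ∃ u ∈ Q₁, D.adj u v = true
  · obtain ⟨u, hu, huv⟩ := hdom
    refine ⟨Q₁, fun x hx => hQ₁V x hx, hindep', ?_⟩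
    intro w hw
    by_cases hwS : w ∈ S
    · rcases hmemS w hwS with rfl | hvw
      · exact Or.inr (Or.inl ⟨u, hu, huv⟩)
      · exact Or.inr (Or.inr ⟨u, hu, v, huv, hvw⟩)
    · rcases hcov w (Finset.mem_sdiff.2 ⟨hw, hwS⟩) with h | ⟨x, hx, hxw⟩ | ⟨x, hx, y, hxy, hyw⟩
      · exact Or.inl h
      · exact Or.inr (Or.inl ⟨x, hx, ((FinDigraph.del_adj_iff D S x w).1 hxw).1⟩)
      · exact Or.inr (Or.inr ⟨x, hx, y, ((FinDigraph.del_adj_iff D S x y).1 hxy).1,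
          ((FinDigraph.del_adj_iff D S y w).1 hyw).1⟩)
  · push_neg at hdom
    have hvQ : ∀ w ∈ Q₁, D.adj v w = false := by
      intro w hw
      by_contra h
      rw [Bool.not_eq_false] at h
      exact hQ₁S w hw (Finset.mem_insert_of_mem
        (Finset.mem_filter.2 ⟨D.adj_mem_right v w h, h⟩))
    have hQv : ∀ w ∈ Q₁, D.adj w v = false := by
      intro w hw
      have := hdom w hw
      cases h : D.adj w v
      · rfl
      · exact absurd h this
    refine ⟨insert v Q₁, ?_, ?_, ?_⟩
    · intro x hx
      rcases Finset.mem_insert.1 hx with rfl | hx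
      · exact hv
      · exact hQ₁V x hx
    · intro u hu w hw
      rcases Finset.mem_insert.1 hu with hu' | hu' <;>
        rcases Finset.mem_insert.1 hw with hw' | hw'
      · rw [hu', hw']; exact D.no_loops v
      · rw [hu']; exact hvQ w hw'
      · rw [hw']; exact hQv u hu'
      · exact hindep' u hu' w hw' 
    · intro w hw
      by_cases hwS : w ∈ S
      · rcases hmemS w hwS with rfl | hvw
        · exact Or.inl (Finset.mem_insert_self _ _)
        · exact Or.inr (Or.inl ⟨v, Finset.mem_insert_self _ _, hvw⟩)
      · rcases hcov w (Finset.mem_sdiff.2 ⟨hw, hwS⟩) with h | ⟨x, hx, hxw⟩ | ⟨x, hx, y, hxy, hyw⟩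
        · exact Or.inl (Finset.mem_insert_of_mem h)
        · exact Or.inr (Or.inl ⟨x, Finset.mem_insert_of_mem hx,
            ((FinDigraph.del_adj_iff D S x w).1 hxw).1⟩)
        · exact Or.inr (Or.inr ⟨x, Finset.mem_insert_of_mem hx, y,
            ((FinDigraph.del_adj_iff D S x y).1 hxy).1,
            ((FinDigraph.del_adj_iff D S y w).1 hyw).1⟩)
end

section
/- Let D be a finite directed graph without self-loops, let v ∈ V(D), and let Q' be a quasi-kernel of the induced subgraph D − N⁺[v] obtained by deleting v and all of its out-neighbors. If there exists u ∈ Q' with u ⟶ v, then Q' is a quasi-kernel of D. -/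
/-- If `Q'` is a quasi-kernel of `D − N⁺[v]` and some `u ∈ Q'` satisfies
`u ⟶ v`, then `Q'` is a quasi-kernel of `D`. -/
theorem quasiKernel_of_del_closedNbhd_of_arc {α : Type} [DecidableEq α]
    (D : FinDigraph α) (v : α) (hv : v ∈ D.verts) (Q' : Finset α)
    (hQ' : (D.del (D.closedNbhd v)).IsQuasiKernel Q')
    (h : ∃ u ∈ Q', D.adj u v = true) :
    D.IsQuasiKernel Q' := by
  obtain ⟨hsub, hind, hcov⟩ := hQ'
  obtain ⟨u, huQ, huv⟩ := h
  set S := D.closedNbhd v with hS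
  have hnot : ∀ q ∈ Q', q ∉ S := by
    intro q hq
    exact (Finset.mem_sdiff.1 (hsub hq)).2
  have hsub' : Q' ⊆ D.verts := fun q hq => (Finset.mem_sdiff.1 (hsub hq)).1
  have hadj : ∀ a b, a ∉ S → b ∉ S → (D.del S).adj a b = D.adj a b := by
    intro a b ha hb
    simp [FinDigraph.del, ha, hb]
  refine ⟨hsub', ?_, ?_⟩
  · intro a ha b hb
    have := hind a ha b hb
    rwa [hadj a b (hnot a ha) (hnot b hb)] at this
  · intro w hw
    by_cases hwS : w ∈ S
    · right
      rcases Finset.mem_insert.1 hwS with rfl | hwN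
      · left; exact ⟨u, huQ, huv⟩
      · right
        refine ⟨u, huQ, v, huv, ?_⟩
        exact (Finset.mem_filter.1 hwN).2
    · have hw' : w ∈ (D.del S).verts := Finset.mem_sdiff.2 ⟨hw, hwS⟩
      rcases hcov w hw' with h1 | ⟨a, haQ, hab⟩ | ⟨a, haQ, b, hab, hbw⟩
      · exact Or.inl h1
      · right; left
        refine ⟨a, haQ, ?_⟩
        rwa [hadj a w (hnot a haQ) hwS] at hab
      · right; right
        have hbS : b ∉ S := by
          intro hbS
          simp [FinDigraph.del, hbS] at hab
        refine ⟨a, haQ, b, ?_, ?_⟩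
        · rwa [hadj a b (hnot a haQ) hbS] at hab
        · rwa [hadj b w hbS hwS] at hbw
end

section
/- Let D be a finite directed graph without self-loops, let v ∈ V(D), and let Q' be a quasi-kernel of the induced subgraph D − N⁺[v] obtained by deleting v and all of its out-neighbors. If no u ∈ Q' satisfies u ⟶ v, then Q' ∪ {v} is a quasi-kernel of D. -/
/-- If `Q'` is a quasi-kernel of `D − N⁺[v]` and no `u ∈ Q'` satisfies
`u ⟶ v`, then `Q' ∪ {v}` is a quasi-kernel of `D`. -/
theorem quasiKernel_insert_of_del_closedNbhd {α : Type} [DecidableEq α]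
    (D : FinDigraph α) (v : α) (hv : v ∈ D.verts) (Q' : Finset α)
    (hQ' : (D.del (D.closedNbhd v)).IsQuasiKernel Q')
    (h : ∀ u ∈ Q', D.adj u v = false) :
    D.IsQuasiKernel (insert v Q') := by
  
  obtain ⟨hsub, hind, hcov⟩ := hQ'
  have hQ'verts : ∀ u ∈ Q', u ∈ D.verts ∧ u ∉ D.closedNbhd v := by
    intro u hu
    have := hsub hu
    simpa [FinDigraph.del, Finset.mem_sdiff] using this
  have hvu : ∀ u ∈ Q', D.adj v u = false := by
    intro u hu
    by_contra hc
    have hc' : D.adj v u = true := by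
      simpa using hc
    exact (hQ'verts u hu).2 (by
      simp [FinDigraph.closedNbhd, FinDigraph.outNbhd, Finset.mem_insert,
        Finset.mem_filter, D.adj_mem_right v u hc', hc'])
  have hadj_del : ∀ a b, (D.del (D.closedNbhd v)).adj a b = true → D.adj a b = true := by
    intro a b hab
    simp only [FinDigraph.del, Bool.and_eq_true, decide_eq_true_eq] at hab
    exact hab.1.1
  refine ⟨?_, ?_, ?_⟩
  · intro x hx
    rcases Finset.mem_insert.1 hx with rfl | hx
    · exact hv
    · exact (hQ'verts x hx).1
  · intro a ha b hb
    rcases Finset.mem_insert.1 ha with hav | ha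
    · subst hav
      rcases Finset.mem_insert.1 hb with hbv | hb
      · subst hbv; exact D.no_loops _
      · exact hvu b hb
    · rcases Finset.mem_insert.1 hb with hbv | hb
      · rw [hbv]; exact h a ha
      · by_contra hc
        have hc' : D.adj a b = true := by simpa using hc
        have hdel : (D.del (D.closedNbhd v)).adj a b = true := by
          simp [FinDigraph.del, hc', (hQ'verts a ha).2, (hQ'verts b hb).2]
        rw [hind a ha b hb] at hdel
        exact absurd hdel (by simp)
  · intro w hw
    by_cases hwv : w = v
    · exact Or.inl (Finset.mem_insert.2 (Or.inl hwv))
    · by_cases hwn : w ∈ D.closedNbhd v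
      · have : D.adj v w = true := by
          rcases Finset.mem_insert.1 hwn with h1 | h2
          · exact absurd h1 hwv
          · exact (Finset.mem_filter.1 h2).2
        exact Or.inr (Or.inl ⟨v, Finset.mem_insert_self _ _, this⟩)
      · have hw' : w ∈ (D.del (D.closedNbhd v)).verts := by
          simp [FinDigraph.del, Finset.mem_sdiff, hw, hwn]
        rcases hcov w hw' with h1 | ⟨u, hu, huw⟩ | ⟨u, hu, x, hux, hxw⟩
        · exact Or.inl (Finset.mem_insert.2 (Or.inr h1))
        · exact Or.inr (Or.inl ⟨u, Finset.mem_insert.2 (Or.inr hu), hadj_del _ _ huw⟩)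
        · exact Or.inr (Or.inr ⟨u, Finset.mem_insert.2 (Or.inr hu), x,
            hadj_del _ _ hux, hadj_del _ _ hxw⟩)
end

section
/- If B is a breakdown sequence for a finite directed graph D without self-loops, then there exists a constructive quasi-kernel Q for B and D with Q ⊆ F(B), where F(B) is the set of first components of the pairs in B. -/
namespace FinDigraph

variable {α : Type} [DecidableEq α]

lemma del_adj_elim {D : FinDigraph α} {S : Finset α} {u v : α}
    (h : (D.del S).adj u v = true) : D.adj u v = true ∧ u ∉ S ∧ v ∉ S := by
  simp only [del, Bool.and_eq_true, decide_eq_true_eq] at h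
  exact ⟨h.1.1, h.1.2, h.2⟩

lemma adj_del_intro {D : FinDigraph α} {S : Finset α} {u v : α}
    (h : D.adj u v = true) (hu : u ∉ S) (hv : v ∉ S) : (D.del S).adj u v = true := by
  simp only [del, Bool.and_eq_true, decide_eq_true_eq]
  exact ⟨⟨h, hu⟩, hv⟩

lemma del_verts' {D : FinDigraph α} {S : Finset α} : (D.del S).verts = D.verts \ S := rfl

lemma F_cons (u : α) (N : Finset α) (B : List (α × Finset α)) :
    F ((u, N) :: B) = insert u (F B) := by
  simp [F]

end FinDigraph

/-- If `B` is a breakdown sequence for `D` then there exists a constructive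
quasi-kernel `Q ⊆ F(B)` for `B` and `D`. -/
theorem exists_constructive_quasiKernel {α : Type} [DecidableEq α]
    (D : FinDigraph α) (B : List (α × Finset α)) (hB : FinDigraph.IsBDS D B) :
    ∃ Q : Finset α, Q ⊆ FinDigraph.F B ∧ D.IsConstructive B Q := by
  induction hB with
  | nil D h =>
    refine ⟨∅, by simp, ⟨⟨by simp, by simp, ?_⟩, by simp⟩⟩
    intro w hw; rw [h] at hw; simp at hw
  | isolated D u B hno hu hB ih =>
    obtain ⟨Q', hQ'F, ⟨hQ'sub, hQ'ind, hQ'cov⟩, hQ'con⟩ := ih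
    have hQ'v : ∀ a ∈ Q', a ∈ D.verts ∧ a ≠ u := by
      intro a ha
      have := hQ'sub ha
      rw [FinDigraph.del_verts'] at this
      simp only [Finset.mem_sdiff, Finset.mem_singleton] at this
      exact this
    refine ⟨insert u Q', ?_, ⟨⟨?_, ?_, ?_⟩, ?_⟩⟩
    · rw [FinDigraph.F_cons]
      exact Finset.insert_subset_insert _ hQ'F
    · intro a ha
      rcases Finset.mem_insert.1 ha with rfl | ha
      · exact hu
      · exact (hQ'v a ha).1
    · intro a _ b _; exact hno a b
    · intro w hw
      by_cases hwu : w = u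
      · exact Or.inl (Finset.mem_insert.2 (Or.inl hwu))
      · have hw' : w ∈ (D.del {u}).verts := by
          rw [FinDigraph.del_verts']
          simp [hw, hwu]
        rcases hQ'cov w hw' with h1 | ⟨v, hv, hadj⟩ | ⟨a, ha, v, h1, h2⟩
        · exact Or.inl (Finset.mem_insert.2 (Or.inr h1))
        · exact Or.inr (Or.inl ⟨v, Finset.mem_insert.2 (Or.inr hv),
            (FinDigraph.del_adj_elim hadj).1⟩)
        · exact Or.inr (Or.inr ⟨a, Finset.mem_insert.2 (Or.inr ha), v,
            (FinDigraph.del_adj_elim h1).1, (FinDigraph.del_adj_elim h2).1⟩)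
    · intro p hp
      rcases List.mem_cons.1 hp with rfl | hp
      · exact Or.inl (Finset.mem_insert_self u Q')
      · rcases hQ'con p hp with h1 | ⟨v, hv, hadj⟩ | ⟨hN, a, v, M, hM, hvM, hadj⟩
        · exact Or.inl (Finset.mem_insert.2 (Or.inr h1))
        · exact Or.inr (Or.inl ⟨v, Finset.mem_insert.2 (Or.inr hv),
            (FinDigraph.del_adj_elim hadj).1⟩)
        · exact Or.inr (Or.inr ⟨hN, a, v, M, List.mem_cons_of_mem _ hM, hvM,
            (FinDigraph.del_adj_elim hadj).1⟩)
  | step D u B hu hdeg hsrc hB ih =>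
    obtain ⟨Q', hQ'F, ⟨hQ'sub, hQ'ind, hQ'cov⟩, hQ'con⟩ := ih
    have hQ'v : ∀ a ∈ Q', a ∈ D.verts ∧ a ∉ D.closedNbhd u := by
      intro a ha
      have := hQ'sub ha
      rw [FinDigraph.del_verts'] at this
      exact Finset.mem_sdiff.1 this
    have hlift : ∀ {a b : α}, (D.del (D.closedNbhd u)).adj a b = true → D.adj a b = true :=
      fun h => (FinDigraph.del_adj_elim h).1
    -- no arc u → a for a ∈ Q'
    have huQ' : ∀ a ∈ Q', D.adj u a = false := by
      intro a ha
      by_contra h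
      have h' : D.adj u a = true := by
        cases hh : D.adj u a
        · exact absurd hh h
        · rfl
      have : a ∈ D.closedNbhd u := by
        unfold FinDigraph.closedNbhd FinDigraph.outNbhd
        exact Finset.mem_insert.2 (Or.inr (Finset.mem_filter.2
          ⟨D.adj_mem_right u a h', h'⟩))
      exact (hQ'v a ha).2 this
    have huninQ' : u ∉ Q' := by
      intro h
      exact (hQ'v u h).2 (Finset.mem_insert_self _ _)
    have hQ'indD : ∀ a ∈ Q', ∀ b ∈ Q', D.adj a b = false := by
      intro a ha b hb
      have := hQ'ind a ha b hb
      cases hh : D.adj a b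
      · rfl
      · exfalso
        have := FinDigraph.adj_del_intro hh (hQ'v a ha).2 (hQ'v b hb).2
        rw [hQ'ind a ha b hb] at this
        exact Bool.false_ne_true this
    -- coverage of vertices in closed nbhd via u
    by_cases hex : ∃ v ∈ Q', D.adj v u = true
    · -- u is covered by Q'; use Q = Q'
      obtain ⟨v0, hv0, hv0u⟩ := hex
      refine ⟨Q', ?_, ⟨⟨?_, hQ'indD, ?_⟩, ?_⟩⟩
      · rw [FinDigraph.F_cons]
        exact hQ'F.trans (Finset.subset_insert _ _)
      · intro a ha; exact (hQ'v a ha).1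
      · intro w hw
        by_cases hwc : w ∈ D.closedNbhd u
        · rcases Finset.mem_insert.1 hwc with rfl | hwn
          · exact Or.inr (Or.inl ⟨v0, hv0, hv0u⟩)
          · have : D.adj u w = true := (Finset.mem_filter.1 hwn).2
            exact Or.inr (Or.inr ⟨v0, hv0, u, hv0u, this⟩)
        · have hw' : w ∈ (D.del (D.closedNbhd u)).verts := by
            rw [FinDigraph.del_verts']; exact Finset.mem_sdiff.2 ⟨hw, hwc⟩
          rcases hQ'cov w hw' with h1 | ⟨v, hv, hadj⟩ | ⟨a, ha, v, h1, h2⟩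
          · exact Or.inl h1
          · exact Or.inr (Or.inl ⟨v, hv, hlift hadj⟩)
          · exact Or.inr (Or.inr ⟨a, ha, v, hlift h1, hlift h2⟩)
      · intro p hp
        rcases List.mem_cons.1 hp with rfl | hp
        · exact Or.inr (Or.inl ⟨v0, hv0, hv0u⟩)
        · rcases hQ'con p hp with h1 | ⟨v, hv, hadj⟩ | ⟨hN, a, v, M, hM, hvM, hadj⟩
          · exact Or.inl h1
          · exact Or.inr (Or.inl ⟨v, hv, hlift hadj⟩)
          · exact Or.inr (Or.inr ⟨hN, a, v, M, List.mem_cons_of_mem _ hM, hvM, hlift hadj⟩)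
    · -- no in-neighbor of u in Q'; use Q = insert u Q'
      push_neg at hex
      have hQ'u : ∀ a ∈ Q', D.adj a u = false := by
        intro a ha
        cases hh : D.adj a u
        · rfl
        · exact absurd hh (hex a ha)
      refine ⟨insert u Q', ?_, ⟨⟨?_, ?_, ?_⟩, ?_⟩⟩
      · rw [FinDigraph.F_cons]
        exact Finset.insert_subset_insert _ hQ'F
      · intro a ha
        rcases Finset.mem_insert.1 ha with rfl | ha
        · exact hu
        · exact (hQ'v a ha).1
      · intro a ha b hb
        rcases Finset.mem_insert.1 ha with ha1 | ha2 <;>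
          rcases Finset.mem_insert.1 hb with hb1 | hb2
        · rw [ha1, hb1]; exact D.no_loops u
        · rw [ha1]; exact huQ' b hb2
        · rw [hb1]; exact hQ'u a ha2
        · exact hQ'indD a ha2 b hb2
      · intro w hw
        by_cases hwc : w ∈ D.closedNbhd u
        · rcases Finset.mem_insert.1 hwc with rfl | hwn
          · exact Or.inl (Finset.mem_insert_self _ _)
          · have : D.adj u w = true := (Finset.mem_filter.1 hwn).2
            exact Or.inr (Or.inl ⟨u, Finset.mem_insert_self _ _, this⟩)
        · have hw' : w ∈ (D.del (D.closedNbhd u)).verts := by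
            rw [FinDigraph.del_verts']; exact Finset.mem_sdiff.2 ⟨hw, hwc⟩
          rcases hQ'cov w hw' with h1 | ⟨v, hv, hadj⟩ | ⟨a, ha, v, h1, h2⟩
          · exact Or.inl (Finset.mem_insert.2 (Or.inr h1))
          · exact Or.inr (Or.inl ⟨v, Finset.mem_insert.2 (Or.inr hv), hlift hadj⟩)
          · exact Or.inr (Or.inr ⟨a, Finset.mem_insert.2 (Or.inr ha), v,
              hlift h1, hlift h2⟩)
      · intro p hp
        rcases List.mem_cons.1 hp with rfl | hp
        · exact Or.inl (Finset.mem_insert_self _ _)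
        · rcases hQ'con p hp with h1 | ⟨v, hv, hadj⟩ | ⟨hN, a, v, M, hM, hvM, hadj⟩
          · exact Or.inl (Finset.mem_insert.2 (Or.inr h1))
          · exact Or.inr (Or.inl ⟨v, Finset.mem_insert.2 (Or.inr hv), hlift hadj⟩)
          · exact Or.inr (Or.inr ⟨hN, a, v, M, List.mem_cons_of_mem _ hM, hvM,
              hlift hadj⟩)
end

section
/- Let D be a finite directed graph without self-loops, let u ∈ V(D) with d⁺(u) > 0 be such that D − N⁺[u] has at most d⁺(u) sources not present in D, let B' be a breakdown sequence for D − N⁺[u], and let Q' ⊆ F(B') be a constructive quasi-kernel with regard to B' and D − N⁺[u]. If there exists t ∈ Q' with t ⟶ u, then Q' is a constructive quasi-kernel with regard to the breakdown sequence (u,N⁺(u)),B' and D; otherwise Q' ∪ {u} is a constructive quasi-kernel with regard to (u,N⁺(u)),B' and D. -/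
/-- Let `u ∈ V(D)` with `d⁺(u) > 0` be such that `D − N⁺[u]` has at most
`d⁺(u)` new sources, let `B'` be a breakdown sequence for `D − N⁺[u]`, and let
`Q' ⊆ F(B')` be a constructive quasi-kernel with regard to `B'` and `D − N⁺[u]`.
If some `t ∈ Q'` satisfies `t ⟶ u` then `Q'` is a constructive quasi-kernel with regard
to `(u,N⁺(u)),B'` and `D`; otherwise `Q' ∪ {u}` is. -/
theorem constructive_step {α : Type} [DecidableEq α]
    (D : FinDigraph α) (u : α) (hu : u ∈ D.verts) (hd : 0 < D.outDeg u)
    (hsrc : ((D.del (D.closedNbhd u)).sources \ D.sources).card ≤ D.outDeg u)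
    (B' : List (α × Finset α)) (hB' : FinDigraph.IsBDS (D.del (D.closedNbhd u)) B')
    (Q' : Finset α) (hQF : Q' ⊆ FinDigraph.F B')
    (hQ' : (D.del (D.closedNbhd u)).IsConstructive B' Q') :
    ((∃ t ∈ Q', D.adj t u = true) →
      D.IsConstructive ((u, D.outNbhd u) :: B') Q') ∧
    (¬ (∃ t ∈ Q', D.adj t u = true) →
      D.IsConstructive ((u, D.outNbhd u) :: B') (insert u Q')) := by
  classical
  set D' := D.del (D.closedNbhd u) with hD'
  obtain ⟨⟨hQsub, hQind, hQcov⟩, hQcon⟩ := hQ'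
  -- basic transfer facts
  have hdelAdj : ∀ a b, D'.adj a b = true → D.adj a b = true := by
    intro a b h
    simp only [hD', FinDigraph.del, Bool.and_eq_true, decide_eq_true_eq] at h
    exact h.1.1
  have hvertQ : ∀ q ∈ Q', q ∈ D.verts ∧ q ∉ D.closedNbhd u := by
    intro q hq
    have := hQsub hq
    simp only [hD', FinDigraph.del, Finset.mem_sdiff] at this
    exact this
  have hAdjEq : ∀ a b, a ∉ D.closedNbhd u → b ∉ D.closedNbhd u →
      D'.adj a b = D.adj a b := by
    intro a b ha hb
    simp only [hD', FinDigraph.del, ha, hb, decide_eq_true_eq, Bool.and_true,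
      decide_true, Bool.and_eq_true]
    simp [ha, hb]
  have hQverts : Q' ⊆ D.verts := fun q hq => (hvertQ q hq).1
  have hQnotNb : ∀ q ∈ Q', D.adj u q = false := by
    intro q hq
    by_contra h
    have h' : D.adj u q = true := by
      cases hb : D.adj u q with
      | false => exact absurd hb h
      | true => rfl
    have : q ∈ D.closedNbhd u := by
      simp [FinDigraph.closedNbhd, FinDigraph.outNbhd, Finset.mem_insert,
        Finset.mem_filter, D.adj_mem_right u q h', h']
    exact (hvertQ q hq).2 this
  have hQind' : ∀ a ∈ Q', ∀ b ∈ Q', D.adj a b = false := by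
    intro a ha b hb
    have := hQind a ha b hb
    rwa [hAdjEq a b (hvertQ a ha).2 (hvertQ b hb).2] at this
  -- coverage of D'.verts
  have hcov' : ∀ Q'' : Finset α, Q' ⊆ Q'' → ∀ w ∈ D'.verts,
      w ∈ Q'' ∨ (∃ v ∈ Q'', D.adj v w = true) ∨
      (∃ x ∈ Q'', ∃ v, D.adj x v = true ∧ D.adj v w = true) := by
    intro Q'' hsub w hw
    rcases hQcov w hw with h | ⟨v, hv, hav⟩ | ⟨x, hx, v, hxv, hvw⟩
    · exact Or.inl (hsub h)
    · exact Or.inr (Or.inl ⟨v, hsub hv, hdelAdj _ _ hav⟩)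
    · exact Or.inr (Or.inr ⟨x, hsub hx, v, hdelAdj _ _ hxv, hdelAdj _ _ hvw⟩)
  -- constructiveness transfer
  have hcon' : ∀ Q'' : Finset α, Q' ⊆ Q'' → ∀ p ∈ B',
      p.1 ∈ Q'' ∨ (∃ v ∈ Q'', D.adj v p.1 = true) ∨
      (p.2 = ∅ ∧ ∃ a v M, ((a : α), (M : Finset α)) ∈ ((u, D.outNbhd u) :: B') ∧
        v ∈ M ∧ D.adj v p.1 = true) := by
    intro Q'' hsub p hp
    rcases hQcon p hp with h | ⟨v, hv, hav⟩ | ⟨hpe, a, v, M, hM, hvM, hav⟩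
    · exact Or.inl (hsub h)
    · exact Or.inr (Or.inl ⟨v, hsub hv, hdelAdj _ _ hav⟩)
    · exact Or.inr (Or.inr ⟨hpe, a, v, M, List.mem_cons_of_mem _ hM, hvM,
        hdelAdj _ _ hav⟩)
  have hmemD' : ∀ w ∈ D.verts, w ∉ D.closedNbhd u → w ∈ D'.verts := by
    intro w hw hnw
    simp only [hD', FinDigraph.del, Finset.mem_sdiff]
    exact ⟨hw, hnw⟩
  constructor
  · rintro ⟨t, ht, htu⟩
    refine ⟨⟨hQverts, hQind', ?_⟩, ?_⟩
    · intro w hw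
      by_cases hwc : w ∈ D.closedNbhd u
      · simp only [FinDigraph.closedNbhd, Finset.mem_insert] at hwc
        rcases hwc with rfl | hwn
        · exact Or.inr (Or.inl ⟨t, ht, htu⟩)
        · simp only [FinDigraph.outNbhd, Finset.mem_filter] at hwn
          exact Or.inr (Or.inr ⟨t, ht, u, htu, hwn.2⟩)
      · exact hcov' Q' (le_refl _) w (hmemD' w hw hwc)
    · intro p hp
      rcases List.mem_cons.1 hp with rfl | hp'
      · exact Or.inr (Or.inl ⟨t, ht, htu⟩)
      · exact hcon' Q' (le_refl _) p hp'
  · intro hnt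
    have hsub : Q' ⊆ insert u Q' := Finset.subset_insert _ _
    refine ⟨⟨?_, ?_, ?_⟩, ?_⟩
    · intro q hq
      rcases Finset.mem_insert.1 hq with rfl | hq'
      · exact hu
      · exact hQverts hq'
    · intro a ha b hb
      rcases Finset.mem_insert.1 ha with rfl | ha'
      · rcases Finset.mem_insert.1 hb with rfl | hb'
        · exact D.no_loops _
        · exact hQnotNb b hb'
      · rcases Finset.mem_insert.1 hb with heq | hb'
        · rw [heq]
          by_contra h
          have h' : D.adj a u = true := by
            cases hc : D.adj a u with
            | false => exact absurd hc h
            | true => rfl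
          exact hnt ⟨a, ha', h'⟩
        · exact hQind' a ha' b hb'
    · intro w hw
      by_cases hwc : w ∈ D.closedNbhd u
      · simp only [FinDigraph.closedNbhd, Finset.mem_insert] at hwc
        rcases hwc with rfl | hwn
        · exact Or.inl (Finset.mem_insert_self _ _)
        · simp only [FinDigraph.outNbhd, Finset.mem_filter] at hwn
          exact Or.inr (Or.inl ⟨u, Finset.mem_insert_self _ _, hwn.2⟩)
      · exact hcov' (insert u Q') hsub w (hmemD' w hw hwc)
    · intro p hp
      rcases List.mem_cons.1 hp with rfl | hp'
      · exact Or.inl (Finset.mem_insert_self _ _)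
      · exact hcon' (insert u Q') hsub p hp'
end
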